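/- Suppose Y = AX where every set of spark(A) − 1 columns of A is linearly independent (by definition of spark), X has k nonzero rows, and 2k < spark(A) + rank(X) − 1. If Z also satisfies Y = AZ with at most k nonzero rows, then the row support of Z equals the row support of X and Z = X. -/

import Mathlib

/-- Number of nonzero entries of a vector (the ℓ⁰ "norm"). -/
noncomputable def sparsity {n : ℕ} (x : Fin n → ℝ) : ℕ :=
  (Finset.univ.filter fun i => x i ≠ 0).card

/-- The spark of a matrix: the minimal number of nonzero entries of a
nonzero kernel vector (equivalently, the minimal number of linearly
dependent columns). -/
noncomputable def spark {m n : ℕ} (A : Matrix (Fin m) (Fin n) ℝ) : ℕ :=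
  sInf {k | ∃ v : Fin n → ℝ, v ≠ 0 ∧ A.mulVec v = 0 ∧ sparsity v = k}

open Classical in
/-- Number of nonzero rows of a matrix (the joint-sparsity "norm" ‖X‖₀). -/
noncomputable def rowSparsity {n M : ℕ} (X : Matrix (Fin n) (Fin M) ℝ) : ℕ :=
  (Finset.univ.filter fun j => X j ≠ 0).card

theorem stmt_17 {m n M : ℕ} (A : Matrix (Fin m) (Fin n) ℝ)
    (X Z : Matrix (Fin n) (Fin M) ℝ) (Y : Matrix (Fin m) (Fin M) ℝ) (k : ℕ)
    (hY : A * X = Y)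
    -- every set of spark(A) − 1 columns of A is linearly independent
    (hind : ∀ t : Finset (Fin n), t.card = spark A - 1 →
      LinearIndependent ℝ (fun i : {j : Fin n // j ∈ t} =>
        A.transpose (i : Fin n)))
    (hk : rowSparsity X = k)
    (hrank : X.rank = Y.rank)
    (hbound : (2 * k : ℝ) < (spark A : ℝ) + (X.rank : ℝ) - 1)
    (hZ : A * Z = Y) (hZk : rowSparsity Z ≤ k) :
    {j : Fin n | Z j ≠ 0} = {j : Fin n | X j ≠ 0} ∧ Z = X := by
  have hZX : Z = X := by
    by_contra hne
    classical
    set W : Matrix (Fin n) (Fin M) ℝ := X - Z with hWdef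
    have hWne : W ≠ 0 := sub_ne_zero.mpr (fun h => hne h.symm)
    have hAW : A * W = 0 := by
      rw [hWdef, Matrix.mul_sub, hY, hZ, sub_self]
    set Sx : Finset (Fin n) := Finset.univ.filter (fun j => X j ≠ 0) with hSx
    set Sz : Finset (Fin n) := Finset.univ.filter (fun j => Z j ≠ 0) with hSz
    set S : Finset (Fin n) := Sx ∪ Sz with hS
    -- rows of W vanish off S
    have hWrow : ∀ i ∉ S, W i = 0 := by
      intro i hi
      rw [hS, Finset.mem_union] at hi
      push_neg at hi
      have hx : X i = 0 := by
        by_contra hxx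
        exact hi.1 (by simp [hSx, hxx])
      have hz : Z i = 0 := by
        by_contra hzz
        exact hi.2 (by simp [hSz, hzz])
      rw [hWdef]
      funext j
      simp [Matrix.sub_apply, hx, hz]
    -- the subspace of kernel vectors supported in S
    set V : Submodule ℝ (Fin n → ℝ) :=
      LinearMap.ker (LinearMap.prod A.mulVecLin
        (LinearMap.pi (fun i : {i : Fin n // i ∉ S} => LinearMap.proj (R := ℝ) (i : Fin n))))
      with hV
    have hmemV : ∀ v : Fin n → ℝ, v ∈ V ↔ (A.mulVec v = 0 ∧ ∀ i ∉ S, v i = 0) := by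
      intro v
      constructor
      · intro hv
        rw [hV, LinearMap.mem_ker] at hv
        have h1 := congrArg Prod.fst hv
        have h2 := congrArg Prod.snd hv
        simp only [LinearMap.prod_apply, Pi.prod, Matrix.mulVecLin_apply, Prod.fst, Prod.snd] at h1 h2
        refine ⟨h1, ?_⟩
        intro i hi
        exact congrFun h2 ⟨i, hi⟩
      · intro ⟨h1, h2⟩
        rw [hV, LinearMap.mem_ker]
        refine Prod.ext ?_ ?_
        · simpa using h1
        · funext i
          exact h2 i.1 i.2
    set d : ℕ := Module.finrank ℝ V with hd
    -- the column space of W is contained in V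
    have hrange : LinearMap.range W.mulVecLin ≤ V := by
      rintro w ⟨c, rfl⟩
      rw [hmemV]
      constructor
      · rw [Matrix.mulVecLin_apply, Matrix.mulVec_mulVec, hAW]
        simp
      · intro i hi
        rw [Matrix.mulVecLin_apply, Matrix.mulVec]
        have := hWrow i hi
        simp [dotProduct, this]
    -- d ≥ 1 : V contains a nonzero column of W
    have hd1 : 1 ≤ d := by
      obtain ⟨i0, hi0⟩ : ∃ i, W i ≠ 0 := by
        by_contra hc
        push_neg at hc
        exact hWne (by funext i j; simp [hc i])
      obtain ⟨j0, hj0⟩ : ∃ j, W i0 j ≠ 0 := by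
        by_contra hc
        push_neg at hc
        exact hi0 (funext hc)
      set c : Fin n → ℝ := fun i => W i j0 with hc
      have hcV : c ∈ V := by
        apply hrange
        refine ⟨Pi.single j0 1, ?_⟩
        funext i
        rw [Matrix.mulVecLin_apply, Matrix.mulVec]
        simp [dotProduct, Pi.single_apply, hc]
      have hcne : c ≠ 0 := fun h => hj0 (congrFun h i0)
      have : V ≠ ⊥ := by
        intro hbot
        rw [hbot, Submodule.mem_bot] at hcV
        exact hcne hcV
      have : 0 < d := by
        rw [hd]
        rw [← Submodule.one_le_finrank_iff] at this
        · exact this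
      omega
    -- d ≤ S.card via restriction to S
    have hdS : d ≤ S.card := by
      set ρ : V →ₗ[ℝ] ({i : Fin n // i ∈ S} → ℝ) :=
        (LinearMap.pi (fun i : {i : Fin n // i ∈ S} => LinearMap.proj (R := ℝ) (i : Fin n))).comp
          V.subtype with hρ
      have hinj : Function.Injective ρ := by
        rw [← LinearMap.ker_eq_bot]
        rw [Submodule.eq_bot_iff]
        rintro ⟨v, hv⟩ hvk
        rw [LinearMap.mem_ker] at hvk
        have : v = 0 := by
          funext i
          by_cases hiS : i ∈ S
          · exact congrFun hvk ⟨i, hiS⟩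
          · exact ((hmemV v).mp hv).2 i hiS
        exact Subtype.ext this
      have := LinearMap.finrank_le_finrank_of_injective hinj
      rwa [Module.finrank_pi, Fintype.card_coe] at this
    -- choose T ⊆ S with T.card = d - 1, and find nonzero v ∈ V vanishing on T
    obtain ⟨T, hTS, hTcard⟩ := Finset.exists_subset_card_eq (s := S) (n := d - 1) (by omega)
    set π : V →ₗ[ℝ] ({i : Fin n // i ∈ T} → ℝ) :=
      (LinearMap.pi (fun i : {i : Fin n // i ∈ T} => LinearMap.proj (R := ℝ) (i : Fin n))).comp
        V.subtype with hπ
    have hker : LinearMap.ker π ≠ ⊥ := by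
      intro hbot
      have hinj : Function.Injective π := LinearMap.ker_eq_bot.mp hbot
      have := LinearMap.finrank_le_finrank_of_injective hinj
      rw [Module.finrank_pi, Fintype.card_coe, hTcard] at this
      omega
    obtain ⟨v, hvker, hvne⟩ := (Submodule.ne_bot_iff _).mp hker
    rw [LinearMap.mem_ker] at hvker
    have hvT : ∀ i ∈ T, (v : Fin n → ℝ) i = 0 := by
      intro i hi
      exact congrFun hvker ⟨i, hi⟩
    have hv0 : (v : Fin n → ℝ) ≠ 0 := fun h => hvne (Subtype.ext h)
    have hvmem := (hmemV _).mp v.2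
    -- spark bound: spark A + d ≤ S.card + 1
    have hsparkle : spark A ≤ sparsity (v : Fin n → ℝ) :=
      Nat.sInf_le ⟨v, hv0, hvmem.1, rfl⟩
    have hsupp : (Finset.univ.filter fun i => (v : Fin n → ℝ) i ≠ 0) ⊆ S \ T := by
      intro i hi
      rw [Finset.mem_filter] at hi
      rw [Finset.mem_sdiff]
      constructor
      · by_contra hiS
        exact hi.2 (hvmem.2 i hiS)
      · intro hiT
        exact hi.2 (hvT i hiT)
    have hsp2 : sparsity (v : Fin n → ℝ) ≤ S.card - T.card := by
      calc sparsity (v : Fin n → ℝ) ≤ (S \ T).card := Finset.card_le_card hsupp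
        _ = S.card - T.card := Finset.card_sdiff_of_subset hTS
    have hTle : T.card ≤ S.card := Finset.card_le_card hTS
    have hspark : spark A + d ≤ S.card + 1 := by
      have := hsparkle.trans hsp2
      omega
    -- rank W ≤ d
    have hrankW : W.rank ≤ d := by
      rw [Matrix.rank, hd]
      exact Submodule.finrank_mono hrange
    -- rank X ≤ rank W + (Sx ∩ Sz).card
    set ov : Finset (Fin n) := Sx ∩ Sz with hov
    have hrankX : X.rank ≤ W.rank + ov.card := by
      rw [Matrix.rank_eq_finrank_span_row, Matrix.rank_eq_finrank_span_row]
      unfold Matrix.row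
      set pW : Submodule ℝ (Fin M → ℝ) := Submodule.span ℝ (Set.range W) with hpW
      set pO : Submodule ℝ (Fin M → ℝ) := Submodule.span ℝ ((ov.image X : Finset (Fin M → ℝ)) : Set (Fin M → ℝ)) with hpO
      have hsub : Submodule.span ℝ (Set.range X) ≤ pW ⊔ pO := by
        rw [Submodule.span_le]
        rintro x ⟨i, rfl⟩
        by_cases hiov : i ∈ ov
        · apply Submodule.mem_sup_right
          apply Submodule.subset_span
          exact Finset.mem_coe.mpr (Finset.mem_image_of_mem X hiov)
        · by_cases hix : X i = 0
          · rw [hix]; exact Submodule.zero_mem _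
          · have hiSx : i ∈ Sx := by simp [hSx, hix]
            have hiz : Z i = 0 := by
              by_contra hzz
              exact hiov (by rw [hov]; exact Finset.mem_inter.mpr ⟨hiSx, by simp [hSz, hzz]⟩)
            have : X i = W i := by
              funext j; simp [hWdef, Matrix.sub_apply, hiz]
            rw [this]
            exact Submodule.mem_sup_left (Submodule.subset_span ⟨i, rfl⟩)
      have h0 : Module.finrank ℝ (Submodule.span ℝ (Set.range X)) ≤ Module.finrank ℝ (pW ⊔ pO : Submodule ℝ (Fin M → ℝ)) :=
        Submodule.finrank_mono hsub
      have hsup : Module.finrank ℝ (pW ⊔ pO : Submodule ℝ (Fin M → ℝ)) ≤ Module.finrank ℝ pW + Module.finrank ℝ pO :=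
        Submodule.finrank_add_le_finrank_add_finrank pW pO
      have h1 : Module.finrank ℝ pO ≤ (ov.image X).card := finrank_span_finset_le_card _
      have h2 : (ov.image X).card ≤ ov.card := Finset.card_image_le
      omega
    -- card counting
    have hcards : S.card + ov.card = Sx.card + Sz.card := by
      rw [hS, hov]
      exact Finset.card_union_add_card_inter _ _
    have hSxk : Sx.card = k := hk
    have hSzk : Sz.card ≤ k := hZk
    -- final contradiction
    have hfinal : spark A + X.rank ≤ 2 * k + 1 := by
      have : X.rank ≤ d + ov.card := le_trans hrankX (by omega)
      omega
    have : (spark A : ℝ) + (X.rank : ℝ) ≤ 2 * k + 1 := by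
      exact_mod_cast hfinal
    linarith
  subst hZX
  exact ⟨rfl, rfl⟩
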